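/- Let A : ℝ → ℝ^{n×n} and let x : ℝ → ℝⁿ be differentiable with x'(t) = A(t) x(t) for all t. Then for every integer i ≥ 1, the stacked vector t ↦ ξ̃_i(x(t)) = (x(t), ⊗²x(t), ..., ⊗ⁱx(t)) is differentiable and satisfies d/dt ξ̃_i(x(t)) = Ãⁱ(A(t)) ξ̃_i(x(t)) for all t. -/

import Mathlib

open Matrix

noncomputable section

/-- `M ≼ 0` for a (symmetric) matrix: `ξᵀ M ξ ≤ 0` for all `ξ`. -/
def NegSemidef {m : Type*} [Fintype m] (M : Matrix m m ℝ) : Prop :=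
  ∀ x : m → ℝ, x ⬝ᵥ M *ᵥ x ≤ 0

/-- Index type for Kronecker powers: `kronIdx n k` indexes the `(k+1)`-st Kronecker power
of an `n`-dimensional object. -/
def kronIdx (n : ℕ) : ℕ → Type
  | 0 => Fin n
  | k+1 => Fin n × kronIdx n k

instance kronIdxFintype (n : ℕ) : ∀ k, Fintype (kronIdx n k)
  | 0 => inferInstanceAs (Fintype (Fin n))
  | k+1 => @instFintypeProd _ _ _ (kronIdxFintype n k)

instance kronIdxDecEq (n : ℕ) : ∀ k, DecidableEq (kronIdx n k)
  | 0 => inferInstanceAs (DecidableEq (Fin n))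
  | k+1 => @instDecidableEqProd _ _ _ (kronIdxDecEq n k)

/-- `matKronPow M k = ⊗^{k+1} M`, the `(k+1)`-st Kronecker power of the matrix `M`
(so `matKronPow M 0 = ⊗¹M = M`). -/
def matKronPow {n : ℕ} (M : Matrix (Fin n) (Fin n) ℝ) : ∀ k, Matrix (kronIdx n k) (kronIdx n k) ℝ
  | 0 => M
  | k+1 => Matrix.kroneckerMap (· * ·) M (matKronPow M k)

/-- Kronecker product of two vectors. -/
def vecKron {α β : Type*} (u : α → ℝ) (v : β → ℝ) : α × β → ℝ := fun p => u p.1 * v p.2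

/-- `vecKronPow x k = ⊗^{k+1} x`, the `(k+1)`-st Kronecker power of the vector `x`. -/
def vecKronPow {n : ℕ} (x : Fin n → ℝ) : ∀ k, kronIdx n k → ℝ
  | 0 => x
  | k+1 => vecKron x (vecKronPow x k)

/-- The lifted matrices: `liftA A k = 𝒜^{k+1}(A)`, with `𝒜¹(A) = A` and
`𝒜^{k+1}(A) = Iₙ ⊗ 𝒜^k(A) + A ⊗ I_{n^k}`. -/
def liftA {n : ℕ} (A : Matrix (Fin n) (Fin n) ℝ) : ∀ k, Matrix (kronIdx n k) (kronIdx n k) ℝ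
  | 0 => A
  | k+1 => Matrix.kroneckerMap (· * ·) (1 : Matrix (Fin n) (Fin n) ℝ) (liftA A k)
      + Matrix.kroneckerMap (· * ·) A (1 : Matrix (kronIdx n k) (kronIdx n k) ℝ)

/-- Index type of the stacked hierarchy system of degree `i`: blocks `k = 0, …, i-1`
corresponding to Kronecker powers `1, …, i`; its cardinality is `ñ_i = n + n² + ⋯ + nⁱ`. -/
abbrev tildeIdx (n i : ℕ) : Type := Σ k : Fin i, kronIdx n k

/-- `Ãⁱ(A) = diag(𝒜¹(A), 𝒜²(A), …, 𝒜ⁱ(A))`. -/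
def tildeA {n : ℕ} (A : Matrix (Fin n) (Fin n) ℝ) (i : ℕ) :
    Matrix (tildeIdx n i) (tildeIdx n i) ℝ :=
  Matrix.blockDiagonal' (fun k : Fin i => liftA A k)

/-- `diag(P, ⊗²P, …, ⊗ⁱP)`. -/
def tildeKronPow {n : ℕ} (P : Matrix (Fin n) (Fin n) ℝ) (i : ℕ) :
    Matrix (tildeIdx n i) (tildeIdx n i) ℝ :=
  Matrix.blockDiagonal' (fun k : Fin i => matKronPow P k)

/-- `ξ̃_i(x) = (x, ⊗²x, …, ⊗ⁱx)`, the stacked vector of Kronecker powers of `x`. -/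
def tildeXi {n : ℕ} (i : ℕ) (x : Fin n → ℝ) : tildeIdx n i → ℝ :=
  fun p => vecKronPow x p.1 p.2

lemma kron_mulVec {α β : Type*} [Fintype α] [Fintype β] [DecidableEq α] [DecidableEq β]
    (M : Matrix α α ℝ) (N : Matrix β β ℝ) (u : α → ℝ) (v : β → ℝ) (a : α) (b : β) :
    (Matrix.kroneckerMap (· * ·) M N *ᵥ vecKron u v) (a, b) = (M *ᵥ u) a * (N *ᵥ v) b := by
  simp only [Matrix.mulVec, Matrix.kroneckerMap, dotProduct, vecKron, Fintype.sum_prod_type,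
    Finset.mul_sum, Finset.sum_mul, Matrix.of_apply]
  rw [Finset.sum_comm]
  exact Finset.sum_congr rfl fun c _ => Finset.sum_congr rfl fun d _ => by ring

lemma key {n : ℕ} (A : ℝ → Matrix (Fin n) (Fin n) ℝ) (x : ℝ → Fin n → ℝ)
    (hx : ∀ t : ℝ, HasDerivAt x (A t *ᵥ x t) t) :
    ∀ (k : ℕ) (p : kronIdx n k) (t : ℝ),
      HasDerivAt (fun s => vecKronPow (x s) k p) ((liftA (A t) k *ᵥ vecKronPow (x t) k) p) t := by
  intro k
  induction k with
  | zero => exact fun p t => hasDerivAt_pi.1 (hx t) p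
  | succ k ih =>
    rintro ⟨a, b⟩ t
    have h1 := hasDerivAt_pi.1 (hx t) a
    have h2 := ih b t
    have h := h1.mul h2
    refine h.congr_deriv (Eq.symm ?_)
    show (liftA (A t) (k+1) *ᵥ vecKronPow (x t) (k+1)) (a, b) = _
    rw [liftA]
    erw [Matrix.add_mulVec, Pi.add_apply]
    erw [show vecKronPow (x t) (k+1) = vecKron (x t) (vecKronPow (x t) k) from rfl,
      kron_mulVec, kron_mulVec, Matrix.one_mulVec, Matrix.one_mulVec]
    ring

/-- if `x'(t) = A(t)x(t)` for all `t`, then for every `i ≥ 1` the stacked vector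
`t ↦ ξ̃_i(x(t))` is differentiable with derivative `Ãⁱ(A(t)) ξ̃_i(x(t))`. -/
theorem stmt19 {n : ℕ} (A : ℝ → Matrix (Fin n) (Fin n) ℝ) (x : ℝ → Fin n → ℝ)
    (hx : ∀ t : ℝ, HasDerivAt x (A t *ᵥ x t) t) (i : ℕ) (hi : 1 ≤ i) :
    ∀ t : ℝ, HasDerivAt (fun s => tildeXi i (x s)) (tildeA (A t) i *ᵥ tildeXi i (x t)) t := by
  intro t
  rw [hasDerivAt_pi]
  rintro ⟨k, q⟩
  have h := key A x hx k q t
  refine h.congr_deriv (Eq.symm ?_)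
  simp only [tildeA, tildeXi, Matrix.mulVec, dotProduct]
  rw [← Finset.univ_sigma_univ, Finset.sum_sigma]
  simp [Matrix.blockDiagonal'_apply, dite_mul]
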